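/- Let U ⊆ ℝ³ be open and let F = (F_ij)_{1≤i,j≤3} be a symmetric matrix field of smooth real-valued functions on U satisfying the gauge condition ∂_k F_ik = 0 on U for each i. Then inc(inc(F)) = ΔΔ F on U, i.e. ε_ikl ε_jmn ∂_k∂_m ( ε_lab ε_ncd ∂_a∂_c F_bd ) = ΔΔ F_ij for all i, j. -/

import Mathlib

open MeasureTheory Real

/-- Partial derivative in the `i`-th coordinate direction of a function on `ℝ³`. -/
noncomputable def pd3 (i : Fin 3) (f : EuclideanSpace ℝ (Fin 3) → ℝ) :
    EuclideanSpace ℝ (Fin 3) → ℝ :=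
  fun x => fderiv ℝ f x (EuclideanSpace.single i 1)

/-- The Levi-Civita symbol `ε_ijk` on `{0,1,2}`. -/
noncomputable def lc (i j k : Fin 3) : ℝ :=
  (((j : ℕ) : ℝ) - ((i : ℕ) : ℝ)) * (((k : ℕ) : ℝ) - ((j : ℕ) : ℝ))
    * (((k : ℕ) : ℝ) - ((i : ℕ) : ℝ)) / 2

/-- The incompatibility tensor `inc(F)_ij = ε_ikl ε_jmn ∂_k ∂_m F_ln`. -/
noncomputable def inc (F : Fin 3 → Fin 3 → EuclideanSpace ℝ (Fin 3) → ℝ)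
    (i j : Fin 3) : EuclideanSpace ℝ (Fin 3) → ℝ :=
  fun x => ∑ k, ∑ l, ∑ m, ∑ n, lc i k l * lc j m n * pd3 k (pd3 m (F l n)) x

/-- The Laplacian `Δf = ∂_m ∂_m f` on `ℝ³`. -/
noncomputable def lap3 (f : EuclideanSpace ℝ (Fin 3) → ℝ) :
    EuclideanSpace ℝ (Fin 3) → ℝ :=
  fun x => ∑ m, pd3 m (pd3 m f) x

section IncAux

variable {U : Set (EuclideanSpace ℝ (Fin 3))}

lemma diffAt3 (hU : IsOpen U) {G : Type*} [NormedAddCommGroup G] [NormedSpace ℝ G]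
    {f : EuclideanSpace ℝ (Fin 3) → G}
    (hf : ContDiffOn ℝ (⊤ : ℕ∞) f U) {x} (hx : x ∈ U) : DifferentiableAt ℝ f x :=
  (hf.differentiableOn (by simp)).differentiableAt (hU.mem_nhds hx)

lemma smooth_fderiv (hU : IsOpen U) {f : EuclideanSpace ℝ (Fin 3) → ℝ}
    (hf : ContDiffOn ℝ (⊤ : ℕ∞) f U) :
    ContDiffOn ℝ (⊤ : ℕ∞) (fun y => fderiv ℝ f y) U :=
  hf.fderiv_of_isOpen hU (by exact_mod_cast le_top)

lemma smooth_pd3 (hU : IsOpen U) {f : EuclideanSpace ℝ (Fin 3) → ℝ}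
    (hf : ContDiffOn ℝ (⊤ : ℕ∞) f U) (k : Fin 3) :
    ContDiffOn ℝ (⊤ : ℕ∞) (pd3 k f) U :=
  (smooth_fderiv hU hf).clm_apply contDiffOn_const

lemma pd3_congrOn (hU : IsOpen U) {f g : EuclideanSpace ℝ (Fin 3) → ℝ}
    (h : Set.EqOn f g U) (k : Fin 3) : Set.EqOn (pd3 k f) (pd3 k g) U := by
  intro x hx
  unfold pd3
  rw [Filter.EventuallyEq.fderiv_eq (h.eventuallyEq_of_mem (hU.mem_nhds hx))]

lemma pd3_commOn (hU : IsOpen U) {f : EuclideanSpace ℝ (Fin 3) → ℝ}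
    (hf : ContDiffOn ℝ (⊤ : ℕ∞) f U) (k m : Fin 3) :
    Set.EqOn (pd3 k (pd3 m f)) (pd3 m (pd3 k f)) U := by
  intro x hx
  have hf' := smooth_fderiv hU hf
  have hd : ∀ᶠ y in nhds x, HasFDerivAt f (fderiv ℝ f y) y := by
    filter_upwards [hU.mem_nhds hx] with y hy using (diffAt3 hU hf hy).hasFDerivAt
  have hd2 : DifferentiableAt ℝ (fun y => fderiv ℝ f y) x := diffAt3 hU hf' hx
  have hsymm := second_derivative_symmetric_of_eventually hd hd2.hasFDerivAt
  have key : ∀ v, fderiv ℝ (fun y => fderiv ℝ f y v) x =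
      (fderiv ℝ (fun y => fderiv ℝ f y) x).flip v := by
    intro v
    have := fderiv_clm_apply (c := fun y => fderiv ℝ f y) (u := fun _ => v) hd2
      (differentiableAt_const v)
    simpa using this
  show pd3 k (pd3 m f) x = pd3 m (pd3 k f) x
  unfold pd3
  rw [key, key]
  exact hsymm _ _

lemma pd3_sum1 (hU : IsOpen U) (f : Fin 3 → EuclideanSpace ℝ (Fin 3) → ℝ)
    (hf : ∀ a, ContDiffOn ℝ (⊤ : ℕ∞) (f a) U) (k : Fin 3) {x} (hx : x ∈ U) :
    pd3 k (fun y => ∑ a, f a y) x = ∑ a, pd3 k (f a) x := by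
  unfold pd3
  rw [fderiv_fun_sum (fun a _ => diffAt3 hU (hf a) hx)]
  simp

lemma pd3_cmul (hU : IsOpen U) {f : EuclideanSpace ℝ (Fin 3) → ℝ}
    (hf : ContDiffOn ℝ (⊤ : ℕ∞) f U) (c : ℝ) (k : Fin 3) {x} (hx : x ∈ U) :
    pd3 k (fun y => c * f y) x = c * pd3 k f x := by
  unfold pd3
  rw [fderiv_const_mul (diffAt3 hU hf hx) c]
  simp

lemma pd3_zeroOn (hU : IsOpen U) {f : EuclideanSpace ℝ (Fin 3) → ℝ}
    (h : Set.EqOn f (fun _ => (0:ℝ)) U) (k : Fin 3) :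
    Set.EqOn (pd3 k f) (fun _ => (0:ℝ)) U := by
  intro x hx
  have := pd3_congrOn hU h k hx
  simpa [pd3, fderiv_const] using this

lemma pd3_sum4 (hU : IsOpen U) (c : Fin 3 → Fin 3 → Fin 3 → Fin 3 → ℝ)
    (f : Fin 3 → Fin 3 → Fin 3 → Fin 3 → EuclideanSpace ℝ (Fin 3) → ℝ)
    (hf : ∀ a b p d, ContDiffOn ℝ (⊤ : ℕ∞) (f a b p d) U) (k : Fin 3) {x} (hx : x ∈ U) :
    pd3 k (fun y => ∑ a, ∑ b, ∑ p, ∑ d, c a b p d * f a b p d y) x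
      = ∑ a, ∑ b, ∑ p, ∑ d, c a b p d * pd3 k (f a b p d) x := by
  have sm0 : ∀ a b p d, ContDiffOn ℝ (⊤ : ℕ∞) (fun y => c a b p d * f a b p d y) U :=
    fun a b p d => contDiffOn_const.mul (hf a b p d)
  have sm1 : ∀ a b p, ContDiffOn ℝ (⊤ : ℕ∞) (fun y => ∑ d, c a b p d * f a b p d y) U :=
    fun a b p => ContDiffOn.sum fun d _ => sm0 a b p d
  have sm2 : ∀ a b, ContDiffOn ℝ (⊤ : ℕ∞) (fun y => ∑ p, ∑ d, c a b p d * f a b p d y) U :=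
    fun a b => ContDiffOn.sum fun p _ => sm1 a b p
  have sm3 : ∀ a, ContDiffOn ℝ (⊤ : ℕ∞) (fun y => ∑ b, ∑ p, ∑ d, c a b p d * f a b p d y) U :=
    fun a => ContDiffOn.sum fun b _ => sm2 a b
  rw [pd3_sum1 hU (fun a y => ∑ b, ∑ p, ∑ d, c a b p d * f a b p d y) sm3 k hx]
  refine Finset.sum_congr rfl fun a _ => ?_
  rw [pd3_sum1 hU (fun b y => ∑ p, ∑ d, c a b p d * f a b p d y) (sm2 a) k hx]
  refine Finset.sum_congr rfl fun b _ => ?_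
  rw [pd3_sum1 hU (fun p y => ∑ d, c a b p d * f a b p d y) (sm1 a b) k hx]
  refine Finset.sum_congr rfl fun p _ => ?_
  rw [pd3_sum1 hU (fun d y => c a b p d * f a b p d y) (sm0 a b p) k hx]
  refine Finset.sum_congr rfl fun d _ => ?_
  exact pd3_cmul hU (hf a b p d) _ k hx

/-- rotate first derivative to the inside, three derivatives -/
lemma rot3 (hU : IsOpen U) {f : EuclideanSpace ℝ (Fin 3) → ℝ}
    (hf : ContDiffOn ℝ (⊤ : ℕ∞) f U) (a b c : Fin 3) :
    Set.EqOn (pd3 a (pd3 b (pd3 c f))) (pd3 b (pd3 c (pd3 a f))) U :=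
  (pd3_commOn hU (smooth_pd3 hU hf c) a b).trans
    (pd3_congrOn hU (pd3_commOn hU hf a c) b)

/-- rotate first derivative to the inside, four derivatives -/
lemma rot4 (hU : IsOpen U) {f : EuclideanSpace ℝ (Fin 3) → ℝ}
    (hf : ContDiffOn ℝ (⊤ : ℕ∞) f U) (a b c d : Fin 3) :
    Set.EqOn (pd3 a (pd3 b (pd3 c (pd3 d f)))) (pd3 b (pd3 c (pd3 d (pd3 a f)))) U :=
  (pd3_commOn hU (smooth_pd3 hU (smooth_pd3 hU hf d) c) a b).trans
    (pd3_congrOn hU (rot3 hU hf a c d) b)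

/-- pull a sum out through two derivatives, pointwise on U -/
lemma pd3_pull2 (hU : IsOpen U) (h : Fin 3 → EuclideanSpace ℝ (Fin 3) → ℝ)
    (hh : ∀ q, ContDiffOn ℝ (⊤ : ℕ∞) (h q) U) (a b : Fin 3) :
    Set.EqOn (pd3 a (pd3 b (fun y => ∑ q, h q y)))
      (fun y => ∑ q, pd3 a (pd3 b (h q)) y) U := by
  have e1 : Set.EqOn (pd3 b (fun y => ∑ q, h q y)) (fun y => ∑ q, pd3 b (h q) y) U :=
    fun y hy => pd3_sum1 hU h hh b hy
  intro y hy
  have e2 := pd3_congrOn hU e1 a hy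
  rw [e2]
  exact pd3_sum1 hU (fun q => pd3 b (h q)) (fun q => smooth_pd3 hU (hh q) b) a hy

/-- pull a sum out through three derivatives, pointwise on U -/
lemma pd3_pull3 (hU : IsOpen U) (h : Fin 3 → EuclideanSpace ℝ (Fin 3) → ℝ)
    (hh : ∀ q, ContDiffOn ℝ (⊤ : ℕ∞) (h q) U) (a b c : Fin 3) :
    Set.EqOn (pd3 a (pd3 b (pd3 c (fun y => ∑ q, h q y))))
      (fun y => ∑ q, pd3 a (pd3 b (pd3 c (h q))) y) U := by
  have e1 : Set.EqOn (pd3 c (fun y => ∑ q, h q y)) (fun y => ∑ q, pd3 c (h q) y) U :=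
    fun y hy => pd3_sum1 hU h hh c hy
  intro y hy
  have e2 := pd3_congrOn hU (pd3_congrOn hU e1 b) a hy
  rw [e2]
  exact pd3_pull2 hU (fun q => pd3 c (h q)) (fun q => smooth_pd3 hU (hh q) c) a b hy

/-- third derivatives of a function vanishing on U vanish on U -/
lemma pd3_zero3 (hU : IsOpen U) {f : EuclideanSpace ℝ (Fin 3) → ℝ}
    (h : Set.EqOn f (fun _ => (0:ℝ)) U) (a b c : Fin 3) :
    Set.EqOn (pd3 a (pd3 b (pd3 c f))) (fun _ => (0:ℝ)) U :=
  pd3_zeroOn hU (pd3_zeroOn hU (pd3_zeroOn hU h c) b) a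

lemma lc_apply (i j k : Fin 3) : lc i j k =
    ![![![0,0,0],![0,0,1],![0,-1,0]],![![0,0,-1],![0,0,0],![1,0,0]],![![0,1,0],![-1,0,0],![0,0,0]]] i j k := by
  fin_cases i <;> fin_cases j <;> fin_cases k <;> norm_num [lc]

lemma contract2 (p q : Fin 3) (h : Fin 3 → Fin 3 → ℝ) :
    ∑ n, ∑ c, ∑ d, lc p q n * (lc n c d * h c d) = h p q - h q p := by
  fin_cases p <;> fin_cases q <;>
    · simp [Fin.sum_univ_three, lc_apply, Matrix.vecHead, Matrix.vecTail]
      try ring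

set_option maxHeartbeats 1000000 in
lemma alg (i j : Fin 3) (g : Fin 3 → Fin 3 → Fin 3 → Fin 3 → Fin 3 → Fin 3 → ℝ) :
    (∑ k, ∑ l, ∑ m, ∑ n, lc i k l * lc j m n *
        (∑ a, ∑ b, ∑ c, ∑ d, lc l a b * lc n c d * g k m a c b d))
      = ∑ k, ∑ m, (g k m i j k m - g k m i m k j - g k m k j i m + g k m k m i j) := by
  have h1 : ∀ k m l : Fin 3,
      (∑ n, lc i k l * lc j m n *
          (∑ a, ∑ b, ∑ c, ∑ d, lc l a b * lc n c d * g k m a c b d))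
        = lc i k l * ((∑ a, ∑ b, lc l a b * g k m a j b m)
            - (∑ a, ∑ b, lc l a b * g k m a m b j)) := by
    intro k m l
    have e1 : (∑ n, lc i k l * lc j m n *
          (∑ a, ∑ b, ∑ c, ∑ d, lc l a b * lc n c d * g k m a c b d))
        = lc i k l * ∑ n, ∑ c, ∑ d, lc j m n *
            (lc n c d * ∑ a, ∑ b, lc l a b * g k m a c b d) := by
      simp only [Fin.sum_univ_three]
      ring
    rw [e1, contract2 j m]
  have h2 : ∀ k m : Fin 3,
      (∑ l, lc i k l * ((∑ a, ∑ b, lc l a b * g k m a j b m)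
          - (∑ a, ∑ b, lc l a b * g k m a m b j)))
        = (g k m i j k m - g k m k j i m) - (g k m i m k j - g k m k m i j) := by
    intro k m
    have e2 : (∑ l, lc i k l * ((∑ a, ∑ b, lc l a b * g k m a j b m)
          - (∑ a, ∑ b, lc l a b * g k m a m b j)))
        = (∑ l, ∑ a, ∑ b, lc i k l * (lc l a b * g k m a j b m))
          - (∑ l, ∑ a, ∑ b, lc i k l * (lc l a b * g k m a m b j)) := by
      simp only [Fin.sum_univ_three]
      ring
    rw [e2, contract2 i k (fun a b => g k m a j b m),
      contract2 i k (fun a b => g k m a m b j)]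
  calc (∑ k, ∑ l, ∑ m, ∑ n, lc i k l * lc j m n *
        (∑ a, ∑ b, ∑ c, ∑ d, lc l a b * lc n c d * g k m a c b d))
      = ∑ k, ∑ m, ∑ l, ∑ n, lc i k l * lc j m n *
        (∑ a, ∑ b, ∑ c, ∑ d, lc l a b * lc n c d * g k m a c b d) :=
        Finset.sum_congr rfl fun k _ => Finset.sum_comm
    _ = ∑ k, ∑ m, ∑ l, lc i k l * ((∑ a, ∑ b, lc l a b * g k m a j b m)
            - (∑ a, ∑ b, lc l a b * g k m a m b j)) :=
        Finset.sum_congr rfl fun k _ => Finset.sum_congr rfl fun m _ =>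
          Finset.sum_congr rfl fun l _ => h1 k m l
    _ = ∑ k, ∑ m, ((g k m i j k m - g k m k j i m) - (g k m i m k j - g k m k m i j)) :=
        Finset.sum_congr rfl fun k _ => Finset.sum_congr rfl fun m _ => h2 k m
    _ = ∑ k, ∑ m, (g k m i j k m - g k m i m k j - g k m k j i m + g k m k m i j) := by
        refine Finset.sum_congr rfl fun k _ => Finset.sum_congr rfl fun m _ => by ring


end IncAux

/-- **Reduction under the divergence-free gauge** (proof of the paper's standard
decomposition theorem): if `∂_k F_ik = 0` on `U` then `inc(inc(F)) = ΔΔF` on `U`. -/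
theorem inc_inc_eq_bilaplacian_of_gauge (U : Set (EuclideanSpace ℝ (Fin 3)))
    (hU : IsOpen U)
    (F : Fin 3 → Fin 3 → EuclideanSpace ℝ (Fin 3) → ℝ)
    (hF : ∀ i j, ContDiffOn ℝ (⊤ : ℕ∞) (F i j) U)
    (hsym : ∀ i j, F i j = F j i)
    (hgauge : ∀ i, ∀ x ∈ U, ∑ k, pd3 k (F i k) x = 0) :
    ∀ i j, ∀ x ∈ U, inc (inc F) i j x = lap3 (lap3 (F i j)) x := by
  intro i j x hx
  -- smoothness of iterated partials
  have smF2 : ∀ a p b d : Fin 3, ContDiffOn ℝ (⊤ : ℕ∞) (pd3 a (pd3 p (F b d))) U :=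
    fun a p b d => smooth_pd3 hU (smooth_pd3 hU (hF b d) p) a
  -- step A : derivatives of inc F
  have hA : ∀ l n k m : Fin 3, pd3 k (pd3 m (inc F l n)) x
      = ∑ a, ∑ b, ∑ p, ∑ d, lc l a b * lc n p d
          * pd3 k (pd3 m (pd3 a (pd3 p (F b d)))) x := by
    intro l n k m
    have e0 : inc F l n
        = fun y => ∑ a, ∑ b, ∑ p, ∑ d, lc l a b * lc n p d * pd3 a (pd3 p (F b d)) y := rfl
    have e1 : Set.EqOn (pd3 m (inc F l n))
        (fun y => ∑ a, ∑ b, ∑ p, ∑ d, lc l a b * lc n p d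
            * pd3 m (pd3 a (pd3 p (F b d))) y) U := by
      intro y hy
      rw [e0]
      exact pd3_sum4 hU (fun a b p d => lc l a b * lc n p d)
        (fun a b p d => pd3 a (pd3 p (F b d))) (fun a b p d => smF2 a p b d) m hy
    have e2 := pd3_congrOn hU e1 k hx
    rw [e2]
    exact pd3_sum4 hU (fun a b p d => lc l a b * lc n p d)
      (fun a b p d => pd3 m (pd3 a (pd3 p (F b d))))
      (fun a b p d => smooth_pd3 hU (smF2 a p b d) m) k hx
  -- gauge facts
  have hGzero : ∀ p : Fin 3, Set.EqOn (fun y => ∑ q, pd3 q (F p q) y) (fun _ => (0:ℝ)) U :=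
    fun p y hy => hgauge p y hy
  have hG0 : ∀ p a b c : Fin 3,
      pd3 a (pd3 b (pd3 c (fun y => ∑ q, pd3 q (F p q) y))) x = 0 :=
    fun p a b c => pd3_zero3 hU (hGzero p) a b c hx
  -- the four contracted terms
  have hT1 : ∀ k : Fin 3, ∑ m, pd3 k (pd3 m (pd3 i (pd3 j (F k m)))) x = 0 := by
    intro k
    calc ∑ m, pd3 k (pd3 m (pd3 i (pd3 j (F k m)))) x
        = ∑ m, pd3 i (pd3 j (pd3 k (pd3 m (F k m)))) x := by
          refine Finset.sum_congr rfl fun m _ => ?_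
          rw [rot4 hU (hF k m) k m i j hx, rot4 hU (hF k m) m i j k hx]
      _ = pd3 i (pd3 j (pd3 k (fun y => ∑ m, pd3 m (F k m) y))) x :=
          (pd3_pull3 hU (fun q => pd3 q (F k q))
            (fun q => smooth_pd3 hU (hF k q) q) i j k hx).symm
      _ = 0 := hG0 k i j k
  have hT2 : ∀ m : Fin 3, ∑ k, pd3 k (pd3 m (pd3 i (pd3 m (F k j)))) x = 0 := by
    intro m
    calc ∑ k, pd3 k (pd3 m (pd3 i (pd3 m (F k j)))) x
        = ∑ k, pd3 m (pd3 i (pd3 m (pd3 k (F j k)))) x := by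
          refine Finset.sum_congr rfl fun k _ => ?_
          rw [hsym k j, rot4 hU (hF j k) k m i m hx]
      _ = pd3 m (pd3 i (pd3 m (fun y => ∑ q, pd3 q (F j q) y))) x :=
          (pd3_pull3 hU (fun q => pd3 q (F j q))
            (fun q => smooth_pd3 hU (hF j q) q) m i m hx).symm
      _ = 0 := hG0 j m i m
  have hT3 : ∀ k : Fin 3, ∑ m, pd3 k (pd3 m (pd3 k (pd3 j (F i m)))) x = 0 := by
    intro k
    calc ∑ m, pd3 k (pd3 m (pd3 k (pd3 j (F i m)))) x
        = ∑ m, pd3 k (pd3 k (pd3 j (pd3 m (F i m)))) x := by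
          refine Finset.sum_congr rfl fun m _ => ?_
          exact pd3_congrOn hU (rot3 hU (hF i m) m k j) k hx
      _ = pd3 k (pd3 k (pd3 j (fun y => ∑ q, pd3 q (F i q) y))) x :=
          (pd3_pull3 hU (fun q => pd3 q (F i q))
            (fun q => smooth_pd3 hU (hF i q) q) k k j hx).symm
      _ = 0 := hG0 i k k j
  have hT4 : (∑ k, ∑ m, pd3 k (pd3 m (pd3 k (pd3 m (F i j)))) x)
      = lap3 (lap3 (F i j)) x := by
    have eR : lap3 (lap3 (F i j)) x = ∑ k, pd3 k (pd3 k (lap3 (F i j))) x := rfl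
    rw [eR]
    refine Finset.sum_congr rfl fun k _ => ?_
    have e1 : ∑ m, pd3 k (pd3 m (pd3 k (pd3 m (F i j)))) x
        = ∑ m, pd3 k (pd3 k (pd3 m (pd3 m (F i j)))) x := by
      refine Finset.sum_congr rfl fun m _ => ?_
      exact pd3_congrOn hU (pd3_commOn hU (smooth_pd3 hU (hF i j) m) m k) k hx
    rw [e1]
    have e2 : lap3 (F i j) = fun y => ∑ m, pd3 m (pd3 m (F i j)) y := rfl
    rw [e2]
    exact (pd3_pull2 hU (fun m => pd3 m (pd3 m (F i j)))
      (fun m => smooth_pd3 hU (smooth_pd3 hU (hF i j) m) m) k k hx).symm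
  -- main computation
  have main0 : inc (inc F) i j x
      = ∑ k, ∑ l, ∑ m, ∑ n, lc i k l * lc j m n * pd3 k (pd3 m (inc F l n)) x := rfl
  rw [main0]
  have main1 : (∑ k, ∑ l, ∑ m, ∑ n, lc i k l * lc j m n * pd3 k (pd3 m (inc F l n)) x)
      = ∑ k, ∑ l, ∑ m, ∑ n, lc i k l * lc j m n
          * (∑ a, ∑ b, ∑ p, ∑ d, lc l a b * lc n p d
              * pd3 k (pd3 m (pd3 a (pd3 p (F b d)))) x) := by
    refine Finset.sum_congr rfl fun k _ => Finset.sum_congr rfl fun l _ =>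
      Finset.sum_congr rfl fun m _ => Finset.sum_congr rfl fun n _ => ?_
    rw [hA l n k m]
  rw [main1, alg i j (fun k m a p b d => pd3 k (pd3 m (pd3 a (pd3 p (F b d)))) x)]
  have split : (∑ k, ∑ m, (pd3 k (pd3 m (pd3 i (pd3 j (F k m)))) x
        - pd3 k (pd3 m (pd3 i (pd3 m (F k j)))) x
        - pd3 k (pd3 m (pd3 k (pd3 j (F i m)))) x
        + pd3 k (pd3 m (pd3 k (pd3 m (F i j)))) x))
      = (∑ k, ∑ m, pd3 k (pd3 m (pd3 i (pd3 j (F k m)))) x)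
        - (∑ k, ∑ m, pd3 k (pd3 m (pd3 i (pd3 m (F k j)))) x)
        - (∑ k, ∑ m, pd3 k (pd3 m (pd3 k (pd3 j (F i m)))) x)
        + (∑ k, ∑ m, pd3 k (pd3 m (pd3 k (pd3 m (F i j)))) x) := by
    simp [Finset.sum_add_distrib, Finset.sum_sub_distrib]
  rw [split]
  have z1 : (∑ k, ∑ m, pd3 k (pd3 m (pd3 i (pd3 j (F k m)))) x) = 0 := by
    simp [hT1]
  have z2 : (∑ k, ∑ m, pd3 k (pd3 m (pd3 i (pd3 m (F k j)))) x) = 0 := by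
    rw [Finset.sum_comm]
    simp [hT2]
  have z3 : (∑ k, ∑ m, pd3 k (pd3 m (pd3 k (pd3 j (F i m)))) x) = 0 := by
    simp [hT3]
  rw [z1, z2, z3, hT4]
  ring
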